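/- arXiv:2605.09831 — 2 statements merged into one kernel-verified Lean document; each statement's English description precedes it below -/
import Mathlib

section
/- For every x ∈ 𝒳_s, the set 𝒱(x) is nonempty, convex, and contained in the closed ball of radius 2 about the origin; moreover the graph {(x, y) ∈ ℝ^p × ℝ^p : x ∈ 𝒳_s and y ∈ 𝒱(x)} is a closed subset of ℝ^p × ℝ^p. In particular, the continuous-time imitation population dynamics form a good upper semicontinuous differential inclusion. -/
open scoped Classical
open MeasureTheory Filter Set

/-- The state space `ℝ^p`, with the Euclidean norm. -/
abbrev Vec (p : ℕ) := EuclideanSpace ℝ (Fin p)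

/-- Maximum of finitely many polynomial utilities at `y`. -/
noncomputable def ubar {p : ℕ} (u : Fin p → Polynomial ℝ) (y : ℝ) : ℝ :=
  ⨆ i, (u i).eval y

/-- The total proportion of `A`-players: `σ(x) = Σ_i x_i`. -/
noncomputable def sigma' {p : ℕ} (x : Vec p) : ℝ := ∑ i, x i

/-- The state space `𝒳_s = ∏_i [0, ρ_i]`. -/
def Xs {p : ℕ} (ρ : Vec p) : Set (Vec p) := {x | ∀ i, x i ∈ Set.Icc 0 (ρ i)}

/-- The set-valued map of the continuous-time imitation population dynamics. -/
noncomputable def Vmap {p : ℕ} (ρ : Vec p) (uA uB : Fin p → Polynomial ℝ)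
    (x : Vec p) : Set (Vec p) :=
  if x ∈ interior (Xs ρ) ∧ ubar uB (sigma' x) < ubar uA (sigma' x) then {ρ - x}
  else if x ∈ interior (Xs ρ) ∧ ubar uA (sigma' x) < ubar uB (sigma' x) then {-x}
  else segment ℝ (ρ - x) (-x)

/-- A Carathéodory solution of the continuous-time imitation population dynamics on `[0,∞)`:
a locally absolutely continuous `𝒳_s`-valued function whose derivative lies in `Vmap`
almost everywhere, expressed in integral form. -/
def IsPopSol {p : ℕ} (ρ : Vec p) (uA uB : Fin p → Polynomial ℝ) (x : ℝ → Vec p) : Prop :=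
  (∀ t, 0 ≤ t → x t ∈ Xs ρ) ∧
  ∃ v : ℝ → Vec p,
    (∀ᵐ t ∂(MeasureTheory.volume.restrict (Set.Ici (0:ℝ))), v t ∈ Vmap ρ uA uB (x t)) ∧
    (∀ t, 0 ≤ t → IntervalIntegrable v MeasureTheory.volume 0 t) ∧
    (∀ t, 0 ≤ t → x t = x 0 + ∫ s in (0:ℝ)..t, v s)

/-- Any value of `Vmap` is contained in the segment from `ρ - x` to `-x`. -/
lemma Vmap_subset_segment {p : ℕ} (ρ : Vec p) (uA uB : Fin p → Polynomial ℝ) (x : Vec p) :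
    Vmap ρ uA uB x ⊆ segment ℝ (ρ - x) (-x) := by
  unfold Vmap
  split_ifs with h1 h2
  · exact Set.singleton_subset_iff.2 (left_mem_segment ℝ _ _)
  · exact Set.singleton_subset_iff.2 (right_mem_segment ℝ _ _)
  · exact le_refl _

/-- `ubar` is continuous. -/
lemma continuous_ubar {p : ℕ} (hp : 0 < p) (u : Fin p → Polynomial ℝ) :
    Continuous (ubar u) := by
  haveI : Nonempty (Fin p) := ⟨⟨0, hp⟩⟩
  have h : ubar u
      = fun y => Finset.univ.sup' Finset.univ_nonempty (fun i => (u i).eval y) := by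
    funext y; rw [Finset.sup'_univ_eq_ciSup]; rfl
  rw [h]
  exact Continuous.finset_sup'_apply _ (fun i _ => (u i).continuous)

lemma continuous_sigma' {p : ℕ} : Continuous (sigma' (p := p)) :=
  continuous_finset_sum _ (fun i _ => PiLp.continuous_apply 2 _ i)

/-- Vectors lying coordinatewise in `[0, ρ_i]` have norm at most `1`. -/
lemma norm_le_one_of_mem {p : ℕ} {ρ : Vec p} (hρ : ∀ i, 0 ≤ ρ i) (hsum : ∑ i, ρ i = 1)
    {y : Vec p} (hy : ∀ i, y i ∈ Set.Icc 0 (ρ i)) : ‖y‖ ≤ 1 := by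
  have hρ1 : ∀ i, ρ i ≤ 1 := fun i => by
    calc ρ i ≤ ∑ j, ρ j := Finset.single_le_sum (fun j _ => hρ j) (Finset.mem_univ i)
    _ = 1 := hsum
  rw [EuclideanSpace.norm_eq]
  have hle : ∑ i, ‖y i‖ ^ 2 ≤ 1 := by
    calc ∑ i, ‖y i‖ ^ 2 ≤ ∑ i, ρ i := by
          refine Finset.sum_le_sum (fun i _ => ?_)
          rw [Real.norm_eq_abs, sq_abs]
          have h0 := (hy i).1
          have h2 := (hy i).2
          nlinarith [hρ1 i]
      _ = 1 := hsum
  calc Real.sqrt (∑ i, ‖y i‖ ^ 2) ≤ Real.sqrt 1 := Real.sqrt_le_sqrt hle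
    _ = 1 := Real.sqrt_one

/-- The state space is closed. -/
lemma isClosed_Xs {p : ℕ} (ρ : Vec p) : IsClosed (Xs ρ) := by
  have h : Xs ρ = ⋂ i, (fun x : Vec p => x i) ⁻¹' Set.Icc 0 (ρ i) := by
    ext x; simp [Xs]
  rw [h]
  exact isClosed_iInter fun i => isClosed_Icc.preimage (PiLp.continuous_apply 2 _ i)

theorem Vmap_good_upper_semicontinuous
    {p : ℕ} (hp : 0 < p) (ρ : Vec p) (hρ : ∀ i, 0 < ρ i) (hsum : ∑ i, ρ i = 1)
    (uA uB : Fin p → Polynomial ℝ) :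
    (∀ x ∈ Xs ρ, (Vmap ρ uA uB x).Nonempty ∧ Convex ℝ (Vmap ρ uA uB x) ∧
      Vmap ρ uA uB x ⊆ Metric.closedBall (0 : Vec p) 2) ∧
    IsClosed {xy : Vec p × Vec p | xy.1 ∈ Xs ρ ∧ xy.2 ∈ Vmap ρ uA uB xy.1} := by
  have hρ0 : ∀ i, (0:ℝ) ≤ ρ i := fun i => (hρ i).le
  -- norm bounds on the endpoints of the segment
  have hsub : ∀ x ∈ Xs ρ, ‖ρ - x‖ ≤ 1 := by
    intro x hx
    refine norm_le_one_of_mem hρ0 hsum (fun i => ?_)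
    have h1 := (hx i).1
    have h2 := (hx i).2
    constructor
    · simpa using h2
    · simpa using h1
  have hxle : ∀ x ∈ Xs ρ, ‖-x‖ ≤ 1 := by
    intro x hx
    rw [norm_neg]
    exact norm_le_one_of_mem hρ0 hsum hx
  have hseg_ball : ∀ x ∈ Xs ρ, segment ℝ (ρ - x) (-x) ⊆ Metric.closedBall (0 : Vec p) 2 := by
    intro x hx
    refine (convex_closedBall _ _).segment_subset ?_ ?_
    · rw [Metric.mem_closedBall, dist_zero_right]
      linarith [hsub x hx]
    · rw [Metric.mem_closedBall, dist_zero_right]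
      linarith [hxle x hx]
  -- compactness of the state space
  have hXc : IsCompact (Xs ρ) := by
    refine Metric.isCompact_of_isClosed_isBounded (isClosed_Xs ρ) ?_
    refine (Metric.isBounded_closedBall (x := (0 : Vec p)) (r := 1)).subset ?_
    intro x hx
    rw [Metric.mem_closedBall, dist_zero_right]
    exact norm_le_one_of_mem hρ0 hsum hx
  -- the "big" graph of the segment-valued map
  set f : Vec p × ℝ → Vec p × Vec p :=
    fun za => (za.1, za.2 • (ρ - za.1) + (1 - za.2) • (-za.1)) with hf_def
  have hf : Continuous f := by
    refine continuous_fst.prodMk ?_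
    exact ((continuous_snd.smul (continuous_const.sub continuous_fst)).add
      ((continuous_const.sub continuous_snd).smul continuous_fst.neg))
  set T : Set (Vec p × Vec p) := f '' (Xs ρ ×ˢ Set.Icc (0:ℝ) 1) with hT_def
  have hTc : IsCompact T := (hXc.prod isCompact_Icc).image hf
  have hGT : {xy : Vec p × Vec p | xy.1 ∈ Xs ρ ∧ xy.2 ∈ Vmap ρ uA uB xy.1} ⊆ T := by
    rintro ⟨x, y⟩ ⟨hx, hy⟩
    obtain ⟨a, b, ha, hb, hab, hy'⟩ := Vmap_subset_segment ρ uA uB x hy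
    refine ⟨(x, a), ⟨hx, ⟨ha, by linarith⟩⟩, ?_⟩
    have hb' : b = 1 - a := by linarith
    simp only [hf_def, Prod.mk.injEq]
    exact ⟨trivial, by rw [← hb']; exact hy'⟩
  have hTmem : ∀ z ∈ T, z.1 ∈ Xs ρ ∧ z.2 ∈ segment ℝ (ρ - z.1) (-z.1) := by
    rintro z ⟨⟨w, a⟩, ⟨hw, ha⟩, rfl⟩
    refine ⟨hw, ⟨a, 1 - a, ha.1, by linarith [ha.2], by ring, rfl⟩⟩
  constructor
  · -- nonempty, convex, bounded
    intro x hx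
    refine ⟨?_, ?_, (Vmap_subset_segment ρ uA uB x).trans (hseg_ball x hx)⟩
    · unfold Vmap
      split_ifs
      · exact ⟨_, rfl⟩
      · exact ⟨_, rfl⟩
      · exact ⟨_, left_mem_segment ℝ _ _⟩
    · unfold Vmap
      split_ifs
      · exact convex_singleton _
      · exact convex_singleton _
      · exact convex_segment _ _
  · -- closedness of the graph
    apply IsSeqClosed.isClosed
    intro seq z hseq hlim
    have hzT : z ∈ T := hTc.isClosed.isSeqClosed (fun n => hGT (hseq n)) hlim
    obtain ⟨hzX, hzseg⟩ := hTmem z hzT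
    refine ⟨hzX, ?_⟩
    have hx1 : Tendsto (fun n => (seq n).1) atTop (nhds z.1) :=
      (continuous_fst.tendsto z).comp hlim
    have hy1 : Tendsto (fun n => (seq n).2) atTop (nhds z.2) :=
      (continuous_snd.tendsto z).comp hlim
    by_cases h1 : z.1 ∈ interior (Xs ρ) ∧ ubar uB (sigma' z.1) < ubar uA (sigma' z.1)
    · have hU : IsOpen {w : Vec p |
          w ∈ interior (Xs ρ) ∧ ubar uB (sigma' w) < ubar uA (sigma' w)} :=
        IsOpen.inter isOpen_interior
          (isOpen_lt ((continuous_ubar hp uB).comp continuous_sigma')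
            ((continuous_ubar hp uA).comp continuous_sigma'))
      have hev : ∀ᶠ n in atTop, (seq n).1 ∈ {w : Vec p |
          w ∈ interior (Xs ρ) ∧ ubar uB (sigma' w) < ubar uA (sigma' w)} :=
        hx1 (hU.mem_nhds h1)
      have hev2 : ∀ᶠ n in atTop, (seq n).2 = ρ - (seq n).1 := by
        refine hev.mono (fun n hn => ?_)
        obtain ⟨hni, hnlt⟩ := hn
        have hmem := (hseq n).2
        unfold Vmap at hmem
        rw [if_pos ⟨hni, hnlt⟩] at hmem
        exact hmem
      have htend : Tendsto (fun n => (seq n).2) atTop (nhds (ρ - z.1)) :=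
        (tendsto_const_nhds.sub hx1).congr'
          (hev2.mono fun n h => h.symm)
      have hy' : z.2 = ρ - z.1 := tendsto_nhds_unique hy1 htend
      unfold Vmap
      rw [if_pos h1]
      exact hy'
    · by_cases h2 : z.1 ∈ interior (Xs ρ) ∧ ubar uA (sigma' z.1) < ubar uB (sigma' z.1)
      · have hU : IsOpen {w : Vec p |
            w ∈ interior (Xs ρ) ∧ ubar uA (sigma' w) < ubar uB (sigma' w)} :=
          IsOpen.inter isOpen_interior
            (isOpen_lt ((continuous_ubar hp uA).comp continuous_sigma')
              ((continuous_ubar hp uB).comp continuous_sigma'))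
        have hev : ∀ᶠ n in atTop, (seq n).1 ∈ {w : Vec p |
            w ∈ interior (Xs ρ) ∧ ubar uA (sigma' w) < ubar uB (sigma' w)} :=
          hx1 (hU.mem_nhds h2)
        have hev2 : ∀ᶠ n in atTop, (seq n).2 = -(seq n).1 := by
          refine hev.mono (fun n hn => ?_)
          obtain ⟨hni, hnlt⟩ := hn
          have hmem := (hseq n).2
          unfold Vmap at hmem
          rw [if_neg, if_pos ⟨hni, hnlt⟩] at hmem
          · exact hmem
          · rintro ⟨-, hlt⟩
            exact absurd hnlt (not_lt.2 hlt.le)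
        have htend : Tendsto (fun n => (seq n).2) atTop (nhds (-z.1)) :=
          hx1.neg.congr' (hev2.mono fun n h => h.symm)
        have hy' : z.2 = -z.1 := tendsto_nhds_unique hy1 htend
        unfold Vmap
        rw [if_neg h1, if_pos h2]
        exact hy'
      · unfold Vmap
        rw [if_neg h1, if_neg h2]
        exact hzseg
end

section
/- Let T > 0 and let x : [0, T] → 𝒳_s be absolutely continuous with x′(t) ∈ 𝒱(x(t)) for almost every t ∈ [0, T] and with x(0) in the interior of 𝒳_s. Then the function z(t) = σ(x(t)) = Σ_i x_i(t) is absolutely continuous with values in [0,1] and satisfies z′(t) ∈ 𝒳(z(t)) for almost every t ∈ [0, T]; that is, z is a solution of the abstract imitation dynamics on [0, T] with initial value σ(x(0)). -/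
open scoped Classical
open MeasureTheory Filter Set

/-- The set-valued map of the abstract imitation dynamics. -/
noncomputable def Xset {p : ℕ} (uA uB : Fin p → Polynomial ℝ) (z : ℝ) : Set ℝ :=
  if ubar uB z < ubar uA z then {1 - z}
  else if ubar uA z < ubar uB z then {-z}
  else Set.Icc (-z) (1 - z)


lemma swap_aux (t : ℝ) (g : ℝ → ℝ)
    (hg : IntegrableOn g (Ioc 0 t) volume) :
    ∫ s in Ioc (0:ℝ) t, Real.exp s * ∫ r in Ioc (0:ℝ) s, g r =
      Real.exp t * (∫ r in Ioc (0:ℝ) t, g r) - ∫ r in Ioc (0:ℝ) t, Real.exp r * g r := by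
  set μ := volume.restrict (Ioc (0:ℝ) t) with hμ
  have hexp : Integrable (fun s : ℝ => Real.exp s) μ := Real.continuous_exp.integrableOn_Ioc
  have hgi : Integrable g μ := hg
  have hprod : Integrable (fun q : ℝ × ℝ => Real.exp q.1 * g q.2) (μ.prod μ) :=
    hexp.mul_prod hgi
  have hSmeas : MeasurableSet {q : ℝ × ℝ | q.2 ≤ q.1} :=
    measurableSet_le measurable_snd measurable_fst
  set H : ℝ → ℝ → ℝ :=
    fun s r => Set.indicator {q : ℝ × ℝ | q.2 ≤ q.1} (fun q => Real.exp q.1 * g q.2) (s, r)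
      with hH
  have hHint : Integrable (Function.uncurry H) (μ.prod μ) := by
    have : Function.uncurry H =
        Set.indicator {q : ℝ × ℝ | q.2 ≤ q.1} (fun q => Real.exp q.1 * g q.2) := by
      ext ⟨s, r⟩; rfl
    rw [this]
    exact hprod.indicator hSmeas
  have swap : ∫ s, (∫ r, H s r ∂μ) ∂μ = ∫ r, (∫ s, H s r ∂μ) ∂μ :=
    integral_integral_swap hHint
  have hexpg : Integrable (fun r : ℝ => Real.exp r * g r) μ := by
    refine Integrable.mono' (hgi.norm.const_mul (Real.exp t))
      (Real.continuous_exp.aestronglyMeasurable.mul hgi.1) ?_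
    filter_upwards [ae_restrict_mem measurableSet_Ioc] with r hr
    rw [norm_mul, Real.norm_eq_abs (Real.exp r), abs_of_pos (Real.exp_pos r)]
    exact mul_le_mul_of_nonneg_right (Real.exp_le_exp.2 hr.2) (norm_nonneg _)
  have hL : ∫ s, (∫ r, H s r ∂μ) ∂μ = ∫ s in Ioc (0:ℝ) t, Real.exp s * ∫ r in Ioc (0:ℝ) s, g r := by
    refine setIntegral_congr_fun measurableSet_Ioc (fun s hs => ?_)
    have h1 : (fun r => H s r) = Set.indicator (Iic s) (fun r => Real.exp s * g r) := by
      ext r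
      simp only [hH, Set.indicator_apply, Set.mem_setOf_eq, Set.mem_Iic]
    rw [h1, integral_indicator measurableSet_Iic, hμ, Measure.restrict_restrict measurableSet_Iic,
      Set.inter_comm, Set.Ioc_inter_Iic, inf_eq_right.mpr hs.2, integral_const_mul]
  have hR : ∫ r, (∫ s, H s r ∂μ) ∂μ = ∫ r in Ioc (0:ℝ) t, (Real.exp t - Real.exp r) * g r := by
    refine setIntegral_congr_fun measurableSet_Ioc (fun r hr => ?_)
    have h1 : (fun s => H s r) = Set.indicator (Ici r) (fun s => Real.exp s * g r) := by
      ext s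
      simp only [hH, Set.indicator_apply, Set.mem_setOf_eq, Set.mem_Ici]
    have h2 : Ici r ∩ Ioc (0:ℝ) t = Icc r t := by
      ext s
      simp only [Set.mem_inter_iff, Set.mem_Ici, Set.mem_Ioc, Set.mem_Icc]
      constructor
      · rintro ⟨h1', h2', h3'⟩; exact ⟨h1', h3'⟩
      · rintro ⟨h1', h2'⟩; exact ⟨h1', lt_of_lt_of_le hr.1 h1', h2'⟩
    rw [h1, integral_indicator measurableSet_Ici, hμ, Measure.restrict_restrict measurableSet_Ici,
      h2, integral_mul_const, MeasureTheory.integral_Icc_eq_integral_Ioc,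
      ← intervalIntegral.integral_of_le hr.2, integral_exp, mul_comm]
  rw [hL, hR] at swap
  rw [swap]
  have hsplit : ∀ r ∈ Ioc (0:ℝ) t, (Real.exp t - Real.exp r) * g r
      = Real.exp t * g r - Real.exp r * g r := fun r _ => by ring
  rw [setIntegral_congr_fun measurableSet_Ioc hsplit,
    integral_sub (hgi.const_mul (Real.exp t)) hexpg, integral_const_mul]

lemma pos_aux (T c : ℝ) (hc : 0 < c) (g : ℝ → ℝ)
    (hg : IntegrableOn g (Ioc 0 T) volume)
    (hfg : ∀ᵐ s ∂(volume.restrict (Ioc (0:ℝ) T)),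
      0 ≤ c + (∫ r in Ioc (0:ℝ) s, g r) + g s) :
    ∀ t ∈ Icc (0:ℝ) T, 0 < c + ∫ r in Ioc (0:ℝ) t, g r := by
  intro t ht
  obtain ⟨ht0, htT⟩ := ht
  have hgt : IntegrableOn g (Ioc 0 t) volume := hg.mono_set (Ioc_subset_Ioc_right htT)
  set F : ℝ → ℝ := fun s => ∫ r in Ioc (0:ℝ) s, g r with hF
  have key := swap_aux t g hgt
  -- integrability of the pieces on Ioc 0 t
  have hexp : IntegrableOn (fun s : ℝ => Real.exp s * c) (Ioc 0 t) volume :=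
    (Real.continuous_exp.mul continuous_const).integrableOn_Ioc
  have hFcont : ContinuousOn F (Icc (0:ℝ) t) :=
    intervalIntegral.continuousOn_primitive ((integrableOn_Icc_iff_integrableOn_Ioc).mpr hgt)
  have hexpF : IntegrableOn (fun s : ℝ => Real.exp s * F s) (Ioc 0 t) volume := by
    refine IntegrableOn.mono_set ?_ (Ioc_subset_Icc_self)
    exact (Real.continuous_exp.continuousOn.mul hFcont).integrableOn_Icc
  have hexpg : IntegrableOn (fun s : ℝ => Real.exp s * g s) (Ioc 0 t) volume := by
    refine Integrable.mono' ((hgt.norm.const_mul (Real.exp t)))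
      (Real.continuous_exp.aestronglyMeasurable.mul hgt.1) ?_
    filter_upwards [ae_restrict_mem measurableSet_Ioc] with r hr
    rw [norm_mul, Real.norm_eq_abs (Real.exp r), abs_of_pos (Real.exp_pos r)]
    exact mul_le_mul_of_nonneg_right (Real.exp_le_exp.2 hr.2) (norm_nonneg _)
  have hsplit : ∫ s in Ioc (0:ℝ) t, Real.exp s * (c + F s + g s)
      = (∫ s in Ioc (0:ℝ) t, Real.exp s * c) + (∫ s in Ioc (0:ℝ) t, Real.exp s * F s)
        + ∫ s in Ioc (0:ℝ) t, Real.exp s * g s := by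
    have h1 : ∀ s : ℝ, Real.exp s * (c + F s + g s)
        = Real.exp s * c + Real.exp s * F s + Real.exp s * g s := fun s => by ring
    simp_rw [h1]
    have hAB : IntegrableOn (fun s : ℝ => Real.exp s * c + Real.exp s * F s) (Ioc 0 t) volume :=
      hexp.add hexpF
    rw [integral_add hAB hexpg, integral_add hexp hexpF]
  have hexpint : ∫ s in Ioc (0:ℝ) t, Real.exp s * c = c * (Real.exp t - 1) := by
    rw [integral_mul_const, ← intervalIntegral.integral_of_le ht0, integral_exp, Real.exp_zero,
      mul_comm]
  have hnonneg : 0 ≤ ∫ s in Ioc (0:ℝ) t, Real.exp s * (c + F s + g s) := by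
    refine integral_nonneg_of_ae ?_
    have hfg' : ∀ᵐ s ∂(volume.restrict (Ioc (0:ℝ) t)), 0 ≤ c + F s + g s :=
      ae_restrict_of_ae_restrict_of_subset (Ioc_subset_Ioc_right htT) hfg
    filter_upwards [hfg'] with s hs
    exact mul_nonneg (Real.exp_pos s).le hs
  rw [hsplit, hexpint, key] at hnonneg
  have hFt : 0 ≤ c * (Real.exp t - 1) + (Real.exp t * F t - ∫ r in Ioc (0:ℝ) t, Real.exp r * g r)
      + ∫ s in Ioc (0:ℝ) t, Real.exp s * g s := hnonneg
  have : c ≤ Real.exp t * (c + F t) := by nlinarith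
  nlinarith [Real.exp_pos t, this]

lemma mem_interior_Xs {p : ℕ} {ρ : Vec p} {y : Vec p} :
    y ∈ interior (Xs ρ) ↔ ∀ i, y i ∈ Ioo 0 (ρ i) := by
  constructor
  · intro h i
    obtain ⟨ε, hε, hball⟩ := Metric.isOpen_iff.1 isOpen_interior y h
    have hXs : Metric.ball y ε ⊆ Xs ρ := hball.trans interior_subset
    have hnorm : ‖(ε/2) • EuclideanSpace.single i (1:ℝ)‖ = ε/2 := by
      rw [norm_smul, EuclideanSpace.norm_single, norm_one, mul_one, Real.norm_eq_abs,
        abs_of_pos (by linarith)]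
    have hmem : ∀ (w : Vec p), ‖w‖ = ε/2 → y + w ∈ Xs ρ := by
      intro w hw
      apply hXs
      rw [Metric.mem_ball, dist_eq_norm, add_sub_cancel_left, hw]
      linarith
    have h1 := hmem (-((ε/2) • EuclideanSpace.single i (1:ℝ))) (by rw [norm_neg, hnorm]) i
    have h2 := hmem ((ε/2) • EuclideanSpace.single i (1:ℝ)) hnorm i
    have happly : ((ε/2) • EuclideanSpace.single i (1:ℝ) : Vec p) i = ε/2 := by
      simp [EuclideanSpace.single_apply]
    rw [PiLp.add_apply, PiLp.neg_apply, happly] at h1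
    rw [PiLp.add_apply, happly] at h2
    exact ⟨by linarith [h1.1], by linarith [h2.2]⟩
  · intro h
    have hopen : IsOpen {z : Vec p | ∀ i, z i ∈ Ioo 0 (ρ i)} := by
      have heq : {z : Vec p | ∀ i, z i ∈ Ioo 0 (ρ i)}
          = ⋂ i, (EuclideanSpace.proj (𝕜 := ℝ) i) ⁻¹' (Ioo 0 (ρ i)) := by
        ext z; simp [EuclideanSpace.proj]
      rw [heq]
      exact isOpen_iInter_of_finite fun i =>
        isOpen_Ioo.preimage (EuclideanSpace.proj (𝕜 := ℝ) i).continuous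
    refine interior_maximal ?_ hopen h
    intro z hz i
    exact ⟨(hz i).1.le, (hz i).2.le⟩

theorem sum_of_solution_solves_abstract_dynamics
    {p : ℕ} (hp : 0 < p) (ρ : Vec p) (hρ : ∀ i, 0 < ρ i) (hsum : ∑ i, ρ i = 1)
    (uA uB : Fin p → Polynomial ℝ)
    (T : ℝ) (hT : 0 < T) (x v : ℝ → Vec p)
    (hxmem : ∀ t ∈ Set.Icc (0:ℝ) T, x t ∈ Xs ρ)
    (hv : ∀ᵐ t ∂(MeasureTheory.volume.restrict (Set.Icc (0:ℝ) T)),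
      v t ∈ Vmap ρ uA uB (x t))
    (hvint : IntervalIntegrable v MeasureTheory.volume 0 T)
    (hxeq : ∀ t ∈ Set.Icc (0:ℝ) T, x t = x 0 + ∫ s in (0:ℝ)..t, v s)
    (hx0 : x 0 ∈ interior (Xs ρ)) :
    (∀ t ∈ Set.Icc (0:ℝ) T, sigma' (x t) ∈ Set.Icc (0:ℝ) 1) ∧
    ∃ w : ℝ → ℝ,
      (∀ᵐ t ∂(MeasureTheory.volume.restrict (Set.Icc (0:ℝ) T)),
        w t ∈ Xset uA uB (sigma' (x t))) ∧
      IntervalIntegrable w MeasureTheory.volume 0 T ∧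
      (∀ t ∈ Set.Icc (0:ℝ) T, sigma' (x t) = sigma' (x 0) + ∫ s in (0:ℝ)..t, w s) := by
  have hvis : ∀ i : Fin p, IntervalIntegrable (fun s => v s i) volume 0 T := by
    intro i
    have h1 : (fun s => v s i) = fun s => (EuclideanSpace.proj (𝕜 := ℝ) i) (v s) := rfl
    rw [h1]
    exact ⟨(EuclideanSpace.proj (𝕜 := ℝ) i).integrable_comp hvint.1,
           (EuclideanSpace.proj (𝕜 := ℝ) i).integrable_comp hvint.2⟩
  have hvt : ∀ t ∈ Icc (0:ℝ) T, IntervalIntegrable v volume 0 t := by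
    intro t ht
    refine hvint.mono_set ?_
    rw [uIcc_of_le ht.1, uIcc_of_le (ht.1.trans ht.2)]
    exact Icc_subset_Icc_right ht.2
  have hxeqi : ∀ (i : Fin p), ∀ t ∈ Icc (0:ℝ) T,
      x t i = x 0 i + ∫ r in Ioc (0:ℝ) t, v r i := by
    intro i t ht
    have h1 := congrArg (fun y : Vec p => y i) (hxeq t ht)
    simp only [PiLp.add_apply] at h1
    rw [h1]
    congr 1
    have h2 : (∫ s in (0:ℝ)..t, v s) i
        = (EuclideanSpace.proj (𝕜 := ℝ) i) (∫ s in (0:ℝ)..t, v s) := rfl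
    rw [h2, ← ContinuousLinearMap.intervalIntegral_comp_comm _ (hvt t ht),
      intervalIntegral.integral_of_le ht.1]
    rfl
  have hseg : ∀ᵐ s ∂(volume.restrict (Icc (0:ℝ) T)),
      ∃ a : ℝ, 0 ≤ a ∧ a ≤ 1 ∧ v s = a • ρ - x s := by
    filter_upwards [hv] with s hs
    have hseg' : v s ∈ segment ℝ (ρ - x s) (-(x s)) := by
      unfold Vmap at hs
      split_ifs at hs with h1 h2
      · rw [Set.mem_singleton_iff] at hs; rw [hs]; exact left_mem_segment ℝ _ _
      · rw [Set.mem_singleton_iff] at hs; rw [hs]; exact right_mem_segment ℝ _ _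
      · exact hs
    obtain ⟨a, b, ha, hb, hab, hv'⟩ := hseg'
    refine ⟨a, ha, by linarith, ?_⟩
    rw [← hv']
    have hx' : a • x s + b • x s = x s := by rw [← add_smul, hab, one_smul]
    calc a • (ρ - x s) + b • (-(x s)) = a • ρ - (a • x s + b • x s) := by
          rw [smul_sub, smul_neg]; abel
      _ = a • ρ - x s := by rw [hx']
  have hx0' := mem_interior_Xs.1 hx0
  have hsegIoc : ∀ᵐ s ∂(volume.restrict (Ioc (0:ℝ) T)),
      ∃ a : ℝ, 0 ≤ a ∧ a ≤ 1 ∧ v s = a • ρ - x s :=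
    ae_restrict_of_ae_restrict_of_subset Ioc_subset_Icc_self hseg
  have hcoord : ∀ (i : Fin p) (s : ℝ) (a : ℝ), v s = a • ρ - x s →
      v s i = a * ρ i - x s i := by
    intro i s a hva
    rw [hva, PiLp.sub_apply, PiLp.smul_apply, smul_eq_mul]
  have hpos : ∀ (i : Fin p), ∀ t ∈ Icc (0:ℝ) T, 0 < x t i ∧ x t i < ρ i := by
    intro i t ht
    constructor
    · have h1 : 0 < x 0 i + ∫ r in Ioc (0:ℝ) t, v r i := by
        refine pos_aux T (x 0 i) (hx0' i).1 (fun s => v s i) (hvis i).1 ?_ t ht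
        filter_upwards [hsegIoc, ae_restrict_mem measurableSet_Ioc] with s hsa hsm
        obtain ⟨a, ha0, ha1, hva⟩ := hsa
        have hxi := hxeqi i s ⟨hsm.1.le, hsm.2⟩
        have hvi := hcoord i s a hva
        rw [← hxi, hvi]
        have : 0 ≤ a * ρ i := mul_nonneg ha0 (hρ i).le
        linarith
      rwa [← hxeqi i t ht] at h1
    · have h2 : 0 < (ρ i - x 0 i) + ∫ r in Ioc (0:ℝ) t, -(v r i) := by
        refine pos_aux T (ρ i - x 0 i) (by linarith [(hx0' i).2]) (fun s => -(v s i))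
          ((hvis i).1.neg) ?_ t ht
        filter_upwards [hsegIoc, ae_restrict_mem measurableSet_Ioc] with s hsa hsm
        obtain ⟨a, ha0, ha1, hva⟩ := hsa
        have hxi := hxeqi i s ⟨hsm.1.le, hsm.2⟩
        have hvi := hcoord i s a hva
        rw [integral_neg, hvi]
        have : 0 ≤ (1 - a) * ρ i := mul_nonneg (by linarith) (hρ i).le
        have hxi' : x s i = x 0 i + ∫ r in Ioc (0:ℝ) s, v r i := hxi
        nlinarith
      rw [integral_neg] at h2
      have hxi := hxeqi i t ht
      linarith
  have hintmem : ∀ t ∈ Icc (0:ℝ) T, x t ∈ interior (Xs ρ) := fun t ht =>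
    mem_interior_Xs.2 fun i => ⟨(hpos i t ht).1, (hpos i t ht).2⟩
  have hz01 : ∀ t ∈ Icc (0:ℝ) T, sigma' (x t) ∈ Icc (0:ℝ) 1 := by
    intro t ht
    have hx := hxmem t ht
    constructor
    · exact Finset.sum_nonneg fun i _ => (hx i).1
    · show (∑ i, x t i) ≤ 1
      rw [← hsum]
      exact Finset.sum_le_sum fun i _ => (hx i).2
  refine ⟨hz01, fun s => ∑ i, v s i, ?_, ?_, ?_⟩
  · filter_upwards [hv, hseg, ae_restrict_mem measurableSet_Icc] with s hvs hsa hsm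
    obtain ⟨a, ha0, ha1, hva⟩ := hsa
    have hxint := hintmem s hsm
    have hws : ∑ i, v s i = a - sigma' (x s) := by
      calc ∑ i, v s i = ∑ i, (a * ρ i - x s i) :=
            Finset.sum_congr rfl fun i _ => hcoord i s a hva
        _ = a * ∑ i, ρ i - ∑ i, x s i := by
            rw [Finset.sum_sub_distrib, Finset.mul_sum]
        _ = a - sigma' (x s) := by rw [hsum, mul_one]; rfl
    unfold Vmap at hvs
    unfold Xset
    rcases lt_trichotomy (ubar uB (sigma' (x s))) (ubar uA (sigma' (x s))) with hBA | hEq | hAB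
    · rw [if_pos ⟨hxint, hBA⟩, Set.mem_singleton_iff] at hvs
      rw [if_pos hBA, Set.mem_singleton_iff]
      calc ∑ i, v s i = ∑ i, (ρ i - x s i) :=
            Finset.sum_congr rfl fun i _ => by rw [hvs, PiLp.sub_apply]
        _ = 1 - sigma' (x s) := by rw [Finset.sum_sub_distrib, hsum]; rfl
    · rw [if_neg (fun h => absurd hEq (ne_of_lt h)),
        if_neg (fun h => absurd hEq (ne_of_gt h))]
      rw [hws]
      exact ⟨by linarith, by linarith⟩
    · rw [if_neg (fun h => absurd h.2 (not_lt.mpr hAB.le)), if_pos ⟨hxint, hAB⟩,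
        Set.mem_singleton_iff] at hvs
      rw [if_neg (not_lt.mpr hAB.le), if_pos hAB, Set.mem_singleton_iff]
      calc ∑ i, v s i = ∑ i, -(x s i) :=
            Finset.sum_congr rfl fun i _ => by rw [hvs, PiLp.neg_apply]
        _ = -sigma' (x s) := by rw [Finset.sum_neg_distrib]; rfl
  · exact ⟨integrable_finset_sum _ fun i _ => (hvis i).1,
      integrable_finset_sum _ fun i _ => (hvis i).2⟩
  · intro t ht
    have hsum' : ∫ s in (0:ℝ)..t, (∑ i, v s i) = ∑ i, ∫ r in Ioc (0:ℝ) t, v r i := by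
      rw [intervalIntegral.integral_of_le ht.1]
      exact integral_finset_sum _ fun i _ => ((hvis i).1.mono_set (Ioc_subset_Ioc_right ht.2))
    rw [hsum']
    show (∑ i, x t i) = (∑ i, x 0 i) + _
    rw [← Finset.sum_add_distrib]
    exact Finset.sum_congr rfl fun i _ => hxeqi i t ht
end
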